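/- Let γ > 0 and let μ be a Borel probability measure on ℝ supported in the interval [0, γ]. Let t > 0 satisfy t² ≥ (3√10/2)·γ. Then the function ℓ_{μ,t}(x) = ∫_ℝ h_t(x-y) dμ(y) is monotone nondecreasing on (-∞, t²/3], monotone nonincreasing on [t²/3 + γ, ∞), and concave on the interval [t²/3, t²/3 + γ]. -/

import Mathlib

open MeasureTheory Real Set Filter Topology

/-- The density kernel of the Lévy distribution (one-sided `1/2`-stable law) of parameter `t`,
up to the constant factor `t/√(2π)`: `u ↦ u^{-3/2} exp(-t²/(2u))` for `u > 0`, and `0` otherwise. -/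
noncomputable def levyKernel (t u : ℝ) : ℝ :=
  if 0 < u then u ^ (-(3 : ℝ) / 2) * Real.exp (-t ^ 2 / (2 * u)) else 0

noncomputable def lkF (t u : ℝ) : ℝ := u ^ (-(3:ℝ)/2) * Real.exp (-t^2/2 * u⁻¹)
noncomputable def lkQ (t u : ℝ) : ℝ := (t^2 - 3*u) / (2*u^2)
noncomputable def lkF1 (t u : ℝ) : ℝ := lkF t u * lkQ t u
noncomputable def lkF2 (t u : ℝ) : ℝ := lkF t u * ((15*u^2 - 10*t^2*u + t^4) / (4*u^4))

lemma lkF_hasDerivAt (t : ℝ) {u : ℝ} (hu : 0 < u) : HasDerivAt (lkF t) (lkF1 t u) u := by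
  have h1 : HasDerivAt (fun u : ℝ => u ^ (-(3:ℝ)/2)) ((-(3:ℝ)/2) * u ^ (-(3:ℝ)/2 - 1)) u :=
    Real.hasDerivAt_rpow_const (Or.inl hu.ne')
  have h2 : HasDerivAt (fun u : ℝ => -t^2/2 * u⁻¹) (-t^2/2 * -(u^2)⁻¹) u :=
    (hasDerivAt_inv hu.ne').const_mul _
  have h4 := h1.mul h2.exp
  convert h4 using 1
  · rfl
  · rfl
  · rfl
  rw [Real.rpow_sub_one hu.ne']
  unfold lkF1 lkF lkQ
  field_simp
  ring

lemma lkF1_hasDerivAt (t : ℝ) {u : ℝ} (hu : 0 < u) : HasDerivAt (lkF1 t) (lkF2 t u) u := by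
  have hc : HasDerivAt (fun u : ℝ => t^2 - 3*u) (-(3*1)) u :=
    ((hasDerivAt_id u).const_mul 3).const_sub (t^2)
  have hd : HasDerivAt (fun u : ℝ => 2*u^2) (2*(2*u^(2-1))) u :=
    (hasDerivAt_pow 2 u).const_mul 2
  have hq : HasDerivAt (lkQ t) ((-(3*1) * (2*u^2) - (t^2 - 3*u) * (2*(2*u^(2-1)))) / (2*u^2)^2) u :=
    hc.div hd (by positivity)
  have h := (lkF_hasDerivAt t hu).mul hq
  convert h using 1
  · rfl
  · rfl
  · rfl
  unfold lkF2 lkF1 lkF lkQ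
  field_simp
  ring

lemma levyKernel_eqOn (t : ℝ) : EqOn (levyKernel t) (lkF t) (Ioi 0) := by
  intro u hu
  rw [levyKernel, if_pos (show (0:ℝ) < u from hu), lkF]
  congr 1
  rw [← div_eq_mul_inv, div_div]

lemma levyKernel_nonneg (t u : ℝ) : 0 ≤ levyKernel t u := by
  rw [levyKernel]; split
  · positivity
  · exact le_refl 0

lemma lkF_pos (t : ℝ) {u : ℝ} (hu : 0 < u) : 0 < lkF t u := by
  rw [lkF]; positivity

lemma levyKernel_hasDerivAt (t : ℝ) {u : ℝ} (hu : 0 < u) :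
    HasDerivAt (levyKernel t) (lkF1 t u) u := by
  refine (lkF_hasDerivAt t hu).congr_of_eventuallyEq ?_
  filter_upwards [isOpen_Ioi.eventually_mem hu] with v hv
  exact levyKernel_eqOn t hv

lemma levyKernel_mono (t : ℝ) (ht0 : 0 < t) :
    ∀ u v : ℝ, u ≤ v → v ≤ t^2/3 → levyKernel t u ≤ levyKernel t v := by
  have hmono : MonotoneOn (levyKernel t) (Ioc 0 (t^2/3)) := by
    apply monotoneOn_of_deriv_nonneg (convex_Ioc 0 (t^2/3))
    · exact fun x hx => ((levyKernel_hasDerivAt t hx.1).continuousAt).continuousWithinAt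
    · intro x hx
      rw [interior_Ioc] at hx
      exact ((levyKernel_hasDerivAt t hx.1).differentiableAt).differentiableWithinAt
    · intro x hx
      rw [interior_Ioc] at hx
      rw [(levyKernel_hasDerivAt t hx.1).deriv]
      rw [lkF1, lkQ]
      have h1 : 0 < lkF t x := lkF_pos t hx.1
      have h2 : 0 ≤ t^2 - 3*x := by nlinarith [hx.2]
      positivity
  intro u v huv hv
  by_cases hu0 : 0 < u
  · exact hmono ⟨hu0, le_trans huv hv⟩ ⟨lt_of_lt_of_le hu0 huv, hv⟩ huv
  · rw [levyKernel, if_neg hu0]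
    exact levyKernel_nonneg t v

lemma levyKernel_anti (t : ℝ) (ht0 : 0 < t) :
    ∀ u v : ℝ, t^2/3 ≤ u → u ≤ v → levyKernel t v ≤ levyKernel t u := by
  have ht3 : 0 < t^2/3 := by positivity
  have hanti : AntitoneOn (levyKernel t) (Ici (t^2/3)) := by
    apply antitoneOn_of_deriv_nonpos (convex_Ici _)
    · exact fun x hx => ((levyKernel_hasDerivAt t (lt_of_lt_of_le ht3 hx)).continuousAt).continuousWithinAt
    · intro x hx
      rw [interior_Ici] at hx
      exact ((levyKernel_hasDerivAt t (lt_trans ht3 hx)).differentiableAt).differentiableWithinAt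
    · intro x hx
      rw [interior_Ici] at hx
      have hx0 : 0 < x := lt_trans ht3 hx
      rw [(levyKernel_hasDerivAt t hx0).deriv, lkF1, lkQ]
      have h1 : 0 < lkF t x := lkF_pos t hx0
      have h2 : t^2 - 3*x ≤ 0 := by nlinarith [mem_Ioi.mp hx]
      have h3 : 0 < 2*x^2 := by positivity
      exact mul_nonpos_of_nonneg_of_nonpos h1.le (div_nonpos_of_nonpos_of_nonneg h2 h3.le)
  intro u v hu huv
  exact hanti hu (le_trans hu huv) huv

lemma levyKernel_le_max (t : ℝ) (ht0 : 0 < t) (u : ℝ) :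
    levyKernel t u ≤ levyKernel t (t^2/3) := by
  rcases le_or_gt u (t^2/3) with h | h
  · exact levyKernel_mono t ht0 u _ h le_rfl
  · exact levyKernel_anti t ht0 _ u le_rfl h.le

lemma levyKernel_concaveOn (t γ : ℝ) (hγ : 0 < γ) (ht0 : 0 < t)
    (ht : 3 * Real.sqrt 10 / 2 * γ ≤ t ^ 2) :
    ConcaveOn ℝ (Icc (t^2/3 - γ) (t^2/3 + γ)) (levyKernel t) := by
  have hs10 : (3:ℝ) ≤ Real.sqrt 10 := by
    rw [show (3:ℝ) = Real.sqrt 9 by rw [show (9:ℝ) = 3^2 by norm_num, Real.sqrt_sq (by norm_num)]]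
    exact Real.sqrt_le_sqrt (by norm_num)
  have hγt : γ * (3 * Real.sqrt 10 / 2) ≤ t^2 := by linarith [ht]
  have hsq : 45/2 * γ^2 ≤ t^4 := by
    have h10 : Real.sqrt 10 ^ 2 = 10 := Real.sq_sqrt (by norm_num)
    have h1 : (3 * Real.sqrt 10 / 2 * γ)^2 ≤ (t^2)^2 := by
      apply sq_le_sq' _ ht
      nlinarith
    nlinarith
  have ha : 0 < t^2/3 - γ := by nlinarith
  apply concaveOn_of_hasDerivWithinAt2_nonpos (f' := lkF1 t) (f'' := lkF2 t) (convex_Icc _ _)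
  · intro x hx
    have hx0 : 0 < x := lt_of_lt_of_le ha hx.1
    exact ((levyKernel_hasDerivAt t hx0).continuousAt).continuousWithinAt
  · intro x hx
    rw [interior_Icc] at hx
    exact (levyKernel_hasDerivAt t (lt_trans ha hx.1)).hasDerivWithinAt
  · intro x hx
    rw [interior_Icc] at hx
    exact (lkF1_hasDerivAt t (lt_trans ha hx.1)).hasDerivWithinAt
  · intro x hx
    rw [interior_Icc] at hx
    have hx0 : 0 < x := lt_trans ha hx.1
    rw [lkF2]
    have h1 : 0 < lkF t x := lkF_pos t hx0
    have h2 : 15*x^2 - 10*t^2*x + t^4 ≤ 0 := by nlinarith [hx.1, hx.2, sq_nonneg (x - t^2/3)]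
    have h3 : 0 < 4*x^4 := by positivity
    exact mul_nonpos_of_nonneg_of_nonpos h1.le (div_nonpos_of_nonpos_of_nonneg h2 h3.le)

lemma levyKernel_measurable (t : ℝ) : Measurable (levyKernel t) := by
  have : levyKernel t = fun u => if 0 < u then
      Real.exp (Real.log u * (-(3:ℝ)/2)) * Real.exp (-t^2 / (2*u)) else 0 := by
    funext u
    rw [levyKernel]
    split_ifs with h
    · rw [Real.rpow_def_of_pos h]
    · rfl
  rw [this]
  refine Measurable.ite measurableSet_Ioi ?_ measurable_const
  exact ((Real.measurable_log.mul measurable_const).exp).mul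
    ((measurable_const.div (measurable_const.mul measurable_id)).exp)

lemma levyKernel_integrable (t : ℝ) (ht0 : 0 < t) (μ : Measure ℝ) [IsProbabilityMeasure μ]
    (x : ℝ) : Integrable (fun y => levyKernel t (x - y)) μ := by
  refine (integrable_const (levyKernel t (t^2/3))).mono' ?_ ?_
  · exact ((levyKernel_measurable t).comp (measurable_const.sub measurable_id)).aestronglyMeasurable
  · refine ae_of_all _ fun y => ?_
    rw [Real.norm_eq_abs, abs_of_nonneg (levyKernel_nonneg t _)]
    exact levyKernel_le_max t ht0 _

theorem levy_convolution_monotonicity_concavity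
    (γ : ℝ) (hγ : 0 < γ) (μ : Measure ℝ) [IsProbabilityMeasure μ]
    (hsupp : μ (Set.Icc 0 γ)ᶜ = 0)
    (t : ℝ) (ht0 : 0 < t) (ht : 3 * Real.sqrt 10 / 2 * γ ≤ t ^ 2) :
    MonotoneOn (fun x => ∫ y, levyKernel t (x - y) ∂μ) (Set.Iic (t ^ 2 / 3)) ∧
    AntitoneOn (fun x => ∫ y, levyKernel t (x - y) ∂μ) (Set.Ici (t ^ 2 / 3 + γ)) ∧
    ConcaveOn ℝ (Set.Icc (t ^ 2 / 3) (t ^ 2 / 3 + γ))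
      (fun x => ∫ y, levyKernel t (x - y) ∂μ) := by
  have hae : ∀ᵐ y ∂μ, y ∈ Set.Icc 0 γ := by
    rw [ae_iff]
    exact hsupp
  have hint := levyKernel_integrable t ht0 μ
  refine ⟨?_, ?_, ?_⟩
  · intro x₁ hx₁ x₂ hx₂ h
    refine integral_mono_ae (hint x₁) (hint x₂) ?_
    filter_upwards [hae] with y hy
    exact levyKernel_mono t ht0 _ _ (by linarith) (by linarith [hy.1, mem_Iic.mp hx₂])
  · intro x₁ hx₁ x₂ hx₂ h
    refine integral_mono_ae (hint x₂) (hint x₁) ?_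
    filter_upwards [hae] with y hy
    exact levyKernel_anti t ht0 _ _ (by linarith [hy.2, mem_Ici.mp hx₁]) (by linarith)
  · have hconc := levyKernel_concaveOn t γ hγ ht0 ht
    refine ⟨convex_Icc _ _, ?_⟩
    intro x hx y hy a b ha hb hab
    have hx' := hx; have hy' := hy
    rw [mem_Icc] at hx' hy'
    have key : ∀ᵐ z ∂μ, a • levyKernel t (x - z) + b • levyKernel t (y - z)
        ≤ levyKernel t (a • x + b • y - z) := by
      filter_upwards [hae] with z hz
      have hmx : x - z ∈ Icc (t^2/3 - γ) (t^2/3 + γ) := by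
        constructor <;> [linarith [hx'.1, hz.2]; linarith [hx'.2, hz.1]]
      have hmy : y - z ∈ Icc (t^2/3 - γ) (t^2/3 + γ) := by
        constructor <;> [linarith [hy'.1, hz.2]; linarith [hy'.2, hz.1]]
      have := hconc.2 hmx hmy ha hb hab
      have harg : a • x + b • y - z = a • (x - z) + b • (y - z) := by
        simp only [smul_eq_mul]
        linear_combination z * hab
      rw [harg]
      exact this
    simp only [smul_eq_mul] at key ⊢
    calc a * ∫ z, levyKernel t (x - z) ∂μ + b * ∫ z, levyKernel t (y - z) ∂μ
        = ∫ z, (a * levyKernel t (x - z) + b * levyKernel t (y - z)) ∂μ := by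
          rw [integral_add ((hint x).const_mul a) ((hint y).const_mul b),
            integral_const_mul, integral_const_mul]
      _ ≤ ∫ z, levyKernel t (a * x + b * y - z) ∂μ :=
          integral_mono_ae (((hint x).const_mul a).add ((hint y).const_mul b)) (hint _) key
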